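/- Let μ be a nonzero locally finite Borel (Radon) measure on ℝ^k. Then for μ-almost every point x one has: (i) liminf_{r→0} μ(B_r(x))/r^k > 0, and (ii) limsup_{r→0} μ(B_r(x))/μ(B_{2r}(x)) ≥ 2^{-k}. -/

import Mathlib

open MeasureTheory Metric Filter Set Topology

lemma aux_div_lt {a b c : ENNReal} (hc0 : c ≠ 0) (hct : c ≠ ⊤) (h : a / b < c) : a ≤ c * b := by
  rcases eq_or_ne b ⊤ with rfl | hbt
  · simp [ENNReal.mul_top hc0]
  rcases eq_or_ne b 0 with rfl | hb0
  · rcases eq_or_ne a 0 with rfl | ha0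
    · simp
    · rw [ENNReal.div_zero ha0] at h
      exact absurd h (by simp [hct.lt_top.not_gt])
  · exact ((ENNReal.div_lt_iff (Or.inl hb0) (Or.inl hbt)).mp h).le

lemma partI (k : ℕ) (μ : Measure (EuclideanSpace ℝ (Fin k))) [IsLocallyFiniteMeasure μ] :
    ∀ᵐ x ∂μ, 0 < liminf (fun r : ℝ => μ (ball x r) / ENNReal.ofReal (r ^ k)) (𝓝[>] (0:ℝ)) := by
  set V := volume (ball (0 : EuclideanSpace ℝ (Fin k)) 1) with hV
  have hV0 : V ≠ 0 := (measure_ball_pos _ _ one_pos).ne'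
  have hVt : V ≠ ⊤ := measure_ball_lt_top.ne
  filter_upwards [Besicovitch.ae_tendsto_rnDeriv volume μ, Measure.rnDeriv_lt_top volume μ]
    with x hx hL
  set L := Measure.rnDeriv volume μ x with hLdef
  have hL1 : L + 1 ≠ ⊤ := ENNReal.add_ne_top.mpr ⟨hL.ne, ENNReal.one_ne_top⟩
  have hL10 : L + 1 ≠ 0 := by simp
  have hev : ∀ᶠ r in 𝓝[>] (0:ℝ),
      volume (closedBall x r) / μ (closedBall x r) < L + 1 :=
    hx.eventually_lt_const (ENNReal.lt_add_right hL.ne one_ne_zero)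
  have htwo : Tendsto (fun r : ℝ => r / 2) (𝓝[>] (0:ℝ)) (𝓝[>] (0:ℝ)) := by
    rw [tendsto_nhdsWithin_iff]
    constructor
    · have h0 : Tendsto (fun r : ℝ => r / 2) (𝓝 (0:ℝ)) (𝓝 ((0:ℝ)/2)) :=
        tendsto_id.div_const 2
      simpa using h0.mono_left nhdsWithin_le_nhds
    · filter_upwards [self_mem_nhdsWithin] with r hr
      exact (div_pos hr two_pos : (0:ℝ) < r / 2)
  have hev2 := htwo.eventually hev
  have h2k : ((2:ENNReal)^k) ≠ ⊤ := by simp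
  have hdent : (L + 1) * 2^k ≠ ⊤ := ENNReal.mul_ne_top hL1 h2k
  have hden0 : (L + 1) * 2^k ≠ 0 := by
    simp [hL10]
  have ha : 0 < V / ((L + 1) * 2^k) := ENNReal.div_pos hV0 hdent
  refine lt_of_lt_of_le ha (le_liminf_of_le (by isBoundedDefault) ?_)
  filter_upwards [hev2, self_mem_nhdsWithin] with r h2 hr
  replace hr : 0 < r := hr
  have hrk0 : ENNReal.ofReal (r^k) ≠ 0 := (ENNReal.ofReal_pos.mpr (pow_pos hr k)).ne'
  have hrkt : ENNReal.ofReal (r^k) ≠ ⊤ := ENNReal.ofReal_ne_top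
  rw [ENNReal.le_div_iff_mul_le (Or.inl hrk0) (Or.inl hrkt)]
  have h1 : volume (closedBall x (r/2)) ≤ (L+1) * μ (closedBall x (r/2)) :=
    aux_div_lt hL10 hL1 h2
  have h2' : μ (closedBall x (r/2)) ≤ μ (ball x r) :=
    measure_mono (closedBall_subset_ball (by linarith))
  have h3 : volume (closedBall x (r/2)) = ENNReal.ofReal ((r/2)^k) * V := by
    rw [Measure.addHaar_closedBall volume x (by positivity), finrank_euclideanSpace_fin]
  have key : ENNReal.ofReal ((r/2)^k) * V ≤ (L+1) * μ (ball x r) :=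
    h3 ▸ (h1.trans (mul_le_mul_right h2' _))
  have hrk : ENNReal.ofReal (r ^ k) = ENNReal.ofReal ((r/2)^k) * 2^k := by
    rw [show ((2:ENNReal)^k) = ENNReal.ofReal (2^k) by
          rw [ENNReal.ofReal_pow (by norm_num)]; norm_num,
        ← ENNReal.ofReal_mul (by positivity), ← mul_pow]
    norm_num
  rw [show V / ((L+1) * 2^k) * ENNReal.ofReal (r^k)
        = V * ENNReal.ofReal (r^k) / ((L+1) * 2^k) by
      rw [div_eq_mul_inv, div_eq_mul_inv]; ring,
    ENNReal.div_le_iff_le_mul (Or.inl hden0) (Or.inl hdent)]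
  calc V * ENNReal.ofReal (r ^ k) = (ENNReal.ofReal ((r/2)^k) * V) * 2^k := by rw [hrk]; ring
    _ ≤ ((L+1) * μ (ball x r)) * 2^k := mul_le_mul_left key _
    _ = μ (ball x r) * ((L+1) * 2^k) := by ring

lemma partII (k : ℕ) (μ : Measure (EuclideanSpace ℝ (Fin k))) [IsLocallyFiniteMeasure μ]
    (x : EuclideanSpace ℝ (Fin k))
    (hpos : 0 < liminf (fun r : ℝ => μ (ball x r) / ENNReal.ofReal (r ^ k)) (𝓝[>] (0:ℝ))) :
    (1 / 2 ^ k : ENNReal) ≤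
      limsup (fun r : ℝ => μ (ball x r) / μ (ball x (2 * r))) (𝓝[>] (0:ℝ)) := by
  by_contra hcon
  push_neg at hcon
  -- a lower bound witness from the liminf
  obtain ⟨a, ha0, halt⟩ := exists_between hpos
  have heva : ∀ᶠ r in 𝓝[>] (0:ℝ), a < μ (ball x r) / ENNReal.ofReal (r ^ k) :=
    eventually_lt_of_lt_liminf halt
  -- a constant c strictly between the limsup and 1/2^k
  obtain ⟨c, hc1, hc2⟩ := exists_between hcon
  have hevlt : ∀ᶠ r in 𝓝[>] (0:ℝ), μ (ball x r) / μ (ball x (2 * r)) < c :=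
    eventually_lt_of_limsup_lt hc1
  -- small balls have finite measure
  obtain ⟨ε, hε, hfin⟩ : ∃ ε > (0:ℝ), μ (ball x ε) < ⊤ := by
    rcases (μ.finiteAt_nhds x) with ⟨s, hs, h⟩
    rcases Metric.mem_nhds_iff.mp hs with ⟨ε, hε, hsub⟩
    exact ⟨ε, hε, lt_of_le_of_lt (measure_mono hsub) h⟩
  have hevfin : ∀ᶠ r in 𝓝[>] (0:ℝ), μ (ball x (2 * r)) ≠ ⊤ := by
    filter_upwards [Ioo_mem_nhdsGT_of_mem (by constructor <;> [rfl; positivity] :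
      (0:ℝ) ∈ Ico 0 (ε/2))] with r hr
    exact (lt_of_le_of_lt (measure_mono (ball_subset_ball (by rcases hr with ⟨h1,h2⟩; linarith)))
      hfin).ne
  have hev0 : ∀ᶠ r in 𝓝[>] (0:ℝ), μ (ball x r) ≠ 0 := by
    filter_upwards [heva] with r hr h0
    rw [h0, ENNReal.zero_div] at hr
    exact absurd hr (by simp)
  obtain ⟨r0, hr0, hsub⟩ := mem_nhdsGT_iff_exists_Ioc_subset.mp
    ((hevlt.and (hev0.and hevfin)) : _)
  replace hr0 : (0:ℝ) < r0 := hr0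
  -- basic facts at scale r ∈ Ioc 0 r0
  have hstep : ∀ r ∈ Ioc (0:ℝ) r0, μ (ball x r) < c * μ (ball x (2 * r)) := by
    intro r hr
    obtain ⟨hlt, h0, hft⟩ := hsub hr
    have hb0 : μ (ball x (2 * r)) ≠ 0 := by
      intro hz
      exact h0 (le_antisymm (hz ▸ measure_mono (ball_subset_ball (by rcases hr with ⟨h1,_⟩; linarith)))
        zero_le)
    exact (ENNReal.div_lt_iff (Or.inl hb0) (Or.inl hft)).mp hlt
  set M := μ (ball x r0) with hM
  have hMt : M ≠ ⊤ := by
    have := (hsub ⟨hr0, le_refl r0⟩).2.2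
    exact (lt_of_le_of_lt (measure_mono (ball_subset_ball (by linarith))) this.lt_top).ne
  have key : ∀ n : ℕ, μ (ball x ((1/2:ℝ)^n * r0)) ≤ c^n * M := by
    intro n
    induction n with
    | zero => simp [hM]
    | succ n ih =>
      have hmem : (1/2:ℝ)^(n+1) * r0 ∈ Ioc (0:ℝ) r0 := by
        constructor
        · positivity
        · nlinarith [pow_le_one₀ (by norm_num : (0:ℝ) ≤ 1/2) (by norm_num : (1/2:ℝ) ≤ 1) (n := n+1)]
      have h2r : 2 * ((1/2:ℝ)^(n+1) * r0) = (1/2:ℝ)^n * r0 := by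
        rw [pow_succ]; ring
      calc μ (ball x ((1/2:ℝ)^(n+1) * r0)) ≤ c * μ (ball x (2 * ((1/2:ℝ)^(n+1) * r0))) :=
            (hstep _ hmem).le
        _ = c * μ (ball x ((1/2:ℝ)^n * r0)) := by rw [h2r]
        _ ≤ c * (c^n * M) := mul_le_mul_right ih _
        _ = c^(n+1) * M := by ring
  -- d := c * 2^k < 1
  have h2k0 : ((2:ENNReal)^k) ≠ 0 := by positivity
  have h2kt : ((2:ENNReal)^k) ≠ ⊤ := by simp
  set d : ENNReal := c * 2^k with hd
  have hd1 : d < 1 := by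
    have := ENNReal.mul_lt_mul_left h2k0 h2kt hc2
    rwa [one_div, ENNReal.inv_mul_cancel h2k0 h2kt] at this
  have hr0k0 : ENNReal.ofReal (r0 ^ k) ≠ 0 := (ENNReal.ofReal_pos.mpr (pow_pos hr0 k)).ne'
  have hr0kt : ENNReal.ofReal (r0 ^ k) ≠ ⊤ := ENNReal.ofReal_ne_top
  -- the ratio along the dyadic sequence is ≤ d^n * (M / ofReal (r0^k))
  have hofr : ∀ n : ℕ, ENNReal.ofReal (((1/2:ℝ)^n * r0) ^ k) * 2^(n*k) = ENNReal.ofReal (r0 ^ k) := by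
    intro n
    rw [mul_pow, ← pow_mul, ENNReal.ofReal_mul (by positivity),
      show ((2:ENNReal)^(n*k)) = ENNReal.ofReal (2^(n*k)) by
        rw [ENNReal.ofReal_pow (by norm_num)]; norm_num]
    rw [mul_right_comm, ← ENNReal.ofReal_mul (by positivity)]
    rw [show ((1:ℝ)/2)^(n*k) * 2^(n*k) = 1 by
      rw [← mul_pow]; norm_num]
    simp
  have hbound : ∀ n : ℕ, μ (ball x ((1/2:ℝ)^n * r0)) / ENNReal.ofReal (((1/2:ℝ)^n * r0) ^ k)
      ≤ d^n * (M / ENNReal.ofReal (r0 ^ k)) := by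
    intro n
    have hposr : (0:ℝ) < (1/2:ℝ)^n * r0 := by positivity
    have hn0 : ENNReal.ofReal (((1/2:ℝ)^n * r0) ^ k) ≠ 0 :=
      (ENNReal.ofReal_pos.mpr (pow_pos hposr k)).ne'
    have hnt : ENNReal.ofReal (((1/2:ℝ)^n * r0) ^ k) ≠ ⊤ := ENNReal.ofReal_ne_top
    rw [ENNReal.div_le_iff_le_mul (Or.inl hn0) (Or.inl hnt)]
    refine (key n).trans ?_
    have : d^n * (M / ENNReal.ofReal (r0 ^ k)) * ENNReal.ofReal (((1/2:ℝ)^n * r0) ^ k)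
        = c^n * (M / ENNReal.ofReal (r0 ^ k)) * (ENNReal.ofReal (((1/2:ℝ)^n * r0) ^ k) * 2^(n*k)) := by
      rw [hd, mul_pow, pow_mul]; ring
    rw [this, hofr n, mul_assoc, ENNReal.div_mul_cancel hr0k0 hr0kt]
  -- the dyadic sequence tends to 0 within Ioi 0
  have hseq : Tendsto (fun n : ℕ => (1/2:ℝ)^n * r0) atTop (𝓝[>] (0:ℝ)) := by
    rw [tendsto_nhdsWithin_iff]
    constructor
    · have h0 : Tendsto (fun n : ℕ => (1/2:ℝ)^n * r0) atTop (𝓝 (0 * r0)) :=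
        (tendsto_pow_atTop_nhds_zero_of_lt_one (by norm_num) (by norm_num)).mul_const r0
      simpa using h0
    · exact Eventually.of_forall fun n => Set.mem_Ioi.mpr (by positivity)
  -- contradiction
  have htend : Tendsto (fun n : ℕ => d^n * (M / ENNReal.ofReal (r0 ^ k))) atTop (𝓝 0) := by
    have h0 := ENNReal.Tendsto.mul_const (ENNReal.tendsto_pow_atTop_nhds_zero_of_lt_one hd1)
      (Or.inr (ENNReal.div_lt_top hMt hr0k0).ne)
    simpa using h0
  have hlt : ∀ᶠ n : ℕ in atTop, d^n * (M / ENNReal.ofReal (r0 ^ k)) < a :=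
    htend.eventually_lt_const ha0
  have hgt : ∀ᶠ n : ℕ in atTop,
      a < μ (ball x ((1/2:ℝ)^n * r0)) / ENNReal.ofReal (((1/2:ℝ)^n * r0) ^ k) :=
    hseq.eventually heva
  obtain ⟨n, h1, h2⟩ := (hlt.and hgt).exists
  exact absurd ((h2.trans_le (hbound n)).trans h1) (lt_irrefl a)


/-- For a nonzero locally finite Borel (Radon) measure `μ` on `ℝ^k`, for `μ`-a.e. `x`:
(i) `liminf_{r→0⁺} μ(B_r(x))/r^k > 0` and
(ii) `limsup_{r→0⁺} μ(B_r(x))/μ(B_{2r}(x)) ≥ 2^{-k}`. -/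
theorem stmt0 (k : ℕ) (μ : Measure (EuclideanSpace ℝ (Fin k)))
    [IsLocallyFiniteMeasure μ] (hμ : μ ≠ 0) :
    ∀ᵐ x ∂μ,
      0 < liminf (fun r : ℝ => μ (ball x r) / ENNReal.ofReal (r ^ k))
          (nhdsWithin (0 : ℝ) (Ioi 0)) ∧
      (1 / 2 ^ k : ENNReal) ≤
        limsup (fun r : ℝ => μ (ball x r) / μ (ball x (2 * r)))
          (nhdsWithin (0 : ℝ) (Ioi 0)) := by
  filter_upwards [partI k μ] with x hx
  exact ⟨hx, partII k μ x hx⟩
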